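/- For every integer k ≥ 2, every integer n with 1 ≤ n ≤ 2k−1 is attainable from T = {(2,0),(0,2k)}. -/

import Mathlib

open Pointwise MeasureTheory

/-- The Newton polyhedron `Γ₊(T)`: the Minkowski sum of the convex hull of the
(real images of the) lattice points of `T` with the nonnegative quadrant. -/
noncomputable def GammaPlus (T : Finset (ℕ × ℕ)) : Set (ℝ × ℝ) :=
  convexHull ℝ ((fun v : ℕ × ℕ => ((v.1 : ℝ), (v.2 : ℝ))) '' (T : Set (ℕ × ℕ))) +
    {v : ℝ × ℝ | 0 ≤ v.1 ∧ 0 ≤ v.2}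

/-- `a(T)`: the smallest `x` with `(x,0) ∈ Γ₊(T)`. -/
noncomputable def axisA (T : Finset (ℕ × ℕ)) : ℝ :=
  sInf {x : ℝ | (x, (0 : ℝ)) ∈ GammaPlus T}

/-- `b(T)`: the smallest `y` with `(0,y) ∈ Γ₊(T)`. -/
noncomputable def axisB (T : Finset (ℕ × ℕ)) : ℝ :=
  sInf {y : ℝ | ((0 : ℝ), y) ∈ GammaPlus T}

/-- `S(T)`: the Lebesgue area of the part of the nonnegative quadrant not in `Γ₊(T)`. -/
noncomputable def areaS (T : Finset (ℕ × ℕ)) : ℝ :=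
  (volume ({v : ℝ × ℝ | 0 ≤ v.1 ∧ 0 ≤ v.2} \ GammaPlus T)).toReal

/-- The Newton number `ν(T) = 2 S(T) - a(T) - b(T) + 1`. -/
noncomputable def newtonNumber (T : Finset (ℕ × ℕ)) : ℝ :=
  2 * areaS T - axisA T - axisB T + 1

/-- An integer `n` is attainable from `T` if `n = ν(T ∪ P)` for some finite `P ⊆ ℕ²`. -/
def Attainable (T : Finset (ℕ × ℕ)) (n : ℤ) : Prop :=
  ∃ P : Finset (ℕ × ℕ), (n : ℝ) = newtonNumber (T ∪ P)

set_option maxHeartbeats 1000000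

lemma gamma_eq (k q : ℕ) (h2 : 2 ≤ q) (hq : q ≤ 2*k) :
    GammaPlus {(2,0),(0,2*k),(0,q)} =
      {v : ℝ×ℝ | 0 ≤ v.1 ∧ 0 ≤ v.2 ∧ 2*(q:ℝ) ≤ q*v.1 + 2*v.2} := by
  have hq0 : (0:ℝ) < q := by exact_mod_cast lt_of_lt_of_le (by norm_num) h2
  have himg : ((fun v : ℕ × ℕ => ((v.1 : ℝ), (v.2 : ℝ))) ''
      (({(2,0),(0,2*k),(0,q)} : Finset (ℕ×ℕ)) : Set (ℕ × ℕ)))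
      = {((2:ℝ),(0:ℝ)), ((0:ℝ),(2*(k:ℝ))), ((0:ℝ),((q:ℝ)))} := by
    simp [Set.image_insert_eq]
  set H : Set (ℝ×ℝ) := {v : ℝ×ℝ | 0 ≤ v.1 ∧ 0 ≤ v.2 ∧ 2*(q:ℝ) ≤ q*v.1 + 2*v.2} with hH
  have hconv : Convex ℝ H := by
    intro x hx y hy a b ha hb hab
    obtain ⟨hx1, hx2, hx3⟩ := hx
    obtain ⟨hy1, hy2, hy3⟩ := hy
    refine ⟨by simpa using add_nonneg (mul_nonneg ha hx1) (mul_nonneg hb hy1),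
      by simpa using add_nonneg (mul_nonneg ha hx2) (mul_nonneg hb hy2), ?_⟩
    have h1 := mul_le_mul_of_nonneg_left hx3 ha
    have h2 := mul_le_mul_of_nonneg_left hy3 hb
    simp only [Prod.fst_add, Prod.snd_add, Prod.smul_fst, Prod.smul_snd, smul_eq_mul]
    nlinarith
  rw [GammaPlus, himg]
  apply le_antisymm
  · rintro v ⟨c, hc, w, hw, rfl⟩
    have hcH : c ∈ H := by
      refine convexHull_min ?_ hconv hc
      rintro p (rfl | rfl | rfl)
      · exact ⟨by norm_num, le_refl _, by first | (simp; nlinarith) | simp | nlinarith⟩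
      · refine ⟨le_refl _, by positivity, ?_⟩
        have : (q:ℝ) ≤ 2*k := by exact_mod_cast hq
        first | (simp; nlinarith) | simp | nlinarith
      · exact ⟨le_refl _, by positivity, by first | (simp; nlinarith) | simp | nlinarith⟩
    obtain ⟨hc1, hc2, hc3⟩ := hcH
    obtain ⟨hw1, hw2⟩ := hw
    refine ⟨by simpa using add_nonneg hc1 hw1, by simpa using add_nonneg hc2 hw2, ?_⟩
    simp only [Prod.fst_add, Prod.snd_add]
    nlinarith
  · rintro ⟨x, y⟩ ⟨h1, h2, h3⟩
    simp only [Set.mem_setOf_eq] at h1 h2 h3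
    by_cases hx2 : 2 ≤ x
    · refine ⟨(2,0), ?_, (x-2, y), ⟨by simpa using hx2, h2⟩, by simp⟩
      exact subset_convexHull ℝ _ (by simp)
    · push_neg at hx2
      have hA : ((0:ℝ),(q:ℝ)) ∈ convexHull ℝ ({((2:ℝ),(0:ℝ)), ((0:ℝ),(2*(k:ℝ))), ((0:ℝ),((q:ℝ)))} : Set (ℝ×ℝ)) :=
        subset_convexHull ℝ _ (by simp)
      have hB : ((2:ℝ),(0:ℝ)) ∈ convexHull ℝ ({((2:ℝ),(0:ℝ)), ((0:ℝ),(2*(k:ℝ))), ((0:ℝ),((q:ℝ)))} : Set (ℝ×ℝ)) :=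
        subset_convexHull ℝ _ (by simp)
      have ht0 : 0 ≤ x/2 := by linarith
      have ht1 : 0 ≤ 1 - x/2 := by linarith
      have hc := (convex_convexHull ℝ ({((2:ℝ),(0:ℝ)), ((0:ℝ),(2*(k:ℝ))), ((0:ℝ),((q:ℝ)))} : Set (ℝ×ℝ))) hA hB ht1 ht0 (by ring)
      refine ⟨_, hc, (0, y - (q - q*x/2)), ⟨le_refl _, by first | (simp; nlinarith) | simp | nlinarith⟩, ?_⟩
      simp only [Prod.smul_mk, smul_eq_mul, Prod.mk_add_mk, Prod.ext_iff]
      constructor <;> ring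

open intervalIntegral in
lemma area_tri (q : ℕ) (h2 : 2 ≤ q) :
    (volume {v : ℝ×ℝ | 0 ≤ v.1 ∧ 0 ≤ v.2 ∧ q*v.1 + 2*v.2 < 2*(q:ℝ)}).toReal = q := by
  have hq0 : (0:ℝ) < q := by exact_mod_cast lt_of_lt_of_le (by norm_num) h2
  set f : ℝ → ℝ := fun x => (q:ℝ) - q*x/2 with hf
  have hset : {v : ℝ×ℝ | 0 ≤ v.1 ∧ 0 ≤ v.2 ∧ q*v.1 + 2*v.2 < 2*(q:ℝ)} =
      regionBetween (fun _ => (0:ℝ)) f (Set.Ico 0 2) ∪ ((Set.Ico (0:ℝ) 2) ×ˢ ({0} : Set ℝ)) := by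
    ext ⟨x, y⟩
    simp only [Set.mem_setOf_eq, regionBetween, Set.mem_union, Set.mem_prod, Set.mem_Ico,
      Set.mem_Ioo, Set.mem_singleton_iff, hf]
    constructor
    · rintro ⟨h1, h2', h3⟩
      have hx2 : x < 2 := by nlinarith
      rcases eq_or_lt_of_le h2' with h | h
      · exact Or.inr ⟨⟨h1, hx2⟩, h.symm⟩
      · exact Or.inl ⟨⟨h1, hx2⟩, h, by nlinarith⟩
    · rintro (⟨⟨h1, hx2⟩, hy0, hyf⟩ | ⟨⟨h1, hx2⟩, rfl⟩)
      · exact ⟨h1, le_of_lt hy0, by nlinarith⟩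
      · exact ⟨h1, le_refl _, by nlinarith⟩
  have hnull : volume ((Set.Ico (0:ℝ) 2) ×ˢ ({0} : Set ℝ)) = 0 := by
    rw [Measure.volume_eq_prod ℝ ℝ, Measure.prod_prod]
    simp
  have habs : volume (regionBetween (fun _ => (0:ℝ)) f (Set.Ico 0 2) ∪ ((Set.Ico (0:ℝ) 2) ×ˢ ({0} : Set ℝ)))
      = volume (regionBetween (fun _ => (0:ℝ)) f (Set.Ico 0 2)) :=
    le_antisymm ((measure_union_le _ _).trans_eq (by rw [hnull, add_zero]))
      (measure_mono Set.subset_union_left)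
  rw [hset, habs]
  have hfc : Continuous f := by
    rw [hf]; continuity
  have hfint : IntegrableOn f (Set.Ico (0:ℝ) 2) :=
    (hfc.integrableOn_Icc (a := 0) (b := 2)).mono_set Set.Ico_subset_Icc_self
  have h0int : IntegrableOn (fun _ => (0:ℝ)) (Set.Ico (0:ℝ) 2) := integrableOn_const (by simp) (by simp)
  have hreg := volume_regionBetween_eq_integral h0int hfint measurableSet_Ico
    (fun x hx => by simp only [hf]; rcases hx with ⟨hx0, hx2⟩; nlinarith)
  simp only [Pi.sub_apply, sub_zero] at hreg
  rw [Measure.volume_eq_prod ℝ ℝ, hreg]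
  have hint : (∫ y in Set.Ico (0:ℝ) 2, f y) = (q:ℝ) := by
    rw [MeasureTheory.integral_Ico_eq_integral_Ioo, ← MeasureTheory.integral_Ioc_eq_integral_Ioo,
      ← intervalIntegral.integral_of_le (by norm_num)]
    simp only [hf]
    rw [intervalIntegral.integral_sub (by apply _root_.intervalIntegrable_const)
      (by apply IntervalIntegrable.div_const; apply IntervalIntegrable.const_mul;
          exact continuous_id.intervalIntegrable _ _)]
    rw [intervalIntegral.integral_const, intervalIntegral.integral_div,
      intervalIntegral.integral_const_mul, integral_id]
    simp [smul_eq_mul]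
    ring
  rw [hint, ENNReal.toReal_ofReal (by positivity)]

lemma newton_tri (k q : ℕ) (h2 : 2 ≤ q) (hq : q ≤ 2*k) :
    newtonNumber {(2,0),(0,2*k),(0,q)} = (q:ℝ) - 1 := by
  have hq0 : (0:ℝ) < q := by exact_mod_cast lt_of_lt_of_le (by norm_num) h2
  have hG := gamma_eq k q h2 hq
  have hA : axisA {(2,0),(0,2*k),(0,q)} = 2 := by
    rw [axisA, hG]
    have hs : {x : ℝ | (x, (0:ℝ)) ∈ {v : ℝ×ℝ | 0 ≤ v.1 ∧ 0 ≤ v.2 ∧ 2*(q:ℝ) ≤ q*v.1 + 2*v.2}}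
        = Set.Ici (2:ℝ) := by
      ext x
      simp only [Set.mem_setOf_eq, Set.mem_Ici]
      constructor
      · rintro ⟨h1, -, h3⟩; nlinarith
      · intro h; exact ⟨by linarith, le_refl _, by nlinarith⟩
    rw [hs, csInf_Ici]
  have hB : axisB {(2,0),(0,2*k),(0,q)} = q := by
    rw [axisB, hG]
    have hs : {y : ℝ | ((0:ℝ), y) ∈ {v : ℝ×ℝ | 0 ≤ v.1 ∧ 0 ≤ v.2 ∧ 2*(q:ℝ) ≤ q*v.1 + 2*v.2}}
        = Set.Ici (q:ℝ) := by
      ext y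
      simp only [Set.mem_setOf_eq, Set.mem_Ici]
      constructor
      · rintro ⟨-, h2', h3⟩; nlinarith
      · intro h; exact ⟨le_refl _, by linarith, by nlinarith⟩
    rw [hs, csInf_Ici]
  have hS : areaS {(2,0),(0,2*k),(0,q)} = q := by
    rw [areaS, hG]
    have hs : ({v : ℝ × ℝ | 0 ≤ v.1 ∧ 0 ≤ v.2} \ {v : ℝ×ℝ | 0 ≤ v.1 ∧ 0 ≤ v.2 ∧ 2*(q:ℝ) ≤ q*v.1 + 2*v.2})
        = {v : ℝ×ℝ | 0 ≤ v.1 ∧ 0 ≤ v.2 ∧ q*v.1 + 2*v.2 < 2*(q:ℝ)} := by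
      ext ⟨x, y⟩
      simp only [Set.mem_diff, Set.mem_setOf_eq, not_and, not_le]
      constructor
      · rintro ⟨⟨h1, h2'⟩, h3⟩
        exact ⟨h1, h2', h3 h1 h2'⟩
      · rintro ⟨h1, h2', h3⟩
        exact ⟨⟨h1, h2'⟩, fun _ _ => h3⟩
    rw [hs]
    exact area_tri q h2
  rw [newtonNumber, hA, hB, hS]
  ring

/-- for `k ≥ 2` every `n` with `1 ≤ n ≤ 2k - 1` is attainable from
`tr(2, 2k)`. -/
theorem stmt_6 (k : ℕ) (hk : 2 ≤ k) (n : ℤ) (hn1 : 1 ≤ n) (hn2 : n ≤ 2 * (k : ℤ) - 1) :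
    Attainable {(2, 0), (0, 2 * k)} n := by
  set q : ℕ := n.toNat + 1 with hqdef
  have hqz : (q : ℤ) = n + 1 := by
    simp [hqdef, Int.toNat_of_nonneg (by linarith : (0:ℤ) ≤ n)]
  have h2 : 2 ≤ q := by omega
  have hq : q ≤ 2*k := by omega
  refine ⟨{(0, q)}, ?_⟩
  have hu : ({(2,0),(0,2*k)} : Finset (ℕ×ℕ)) ∪ {(0,q)} = {(2,0),(0,2*k),(0,q)} := by
    ext p; simp [or_assoc]
  rw [hu, newton_tri k q h2 hq]
  have hc : (q:ℝ) = (n:ℝ) + 1 := by exact_mod_cast hqz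
  rw [hc]
  ring
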